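/- Fix a parity function ε: I → {0,1} with ε_i ≠ ε_j whenever c_{ij} = −1. Then c̃_{ij}(ℓ) = 0 unless ℓ + ε_i + ε_j is odd (i.e. ℓ + ε_i + ε_j + 1 ∈ 2Z). -/

import Mathlib

open Matrix

noncomputable def negz : LaurentSeries ℚ →+* LaurentSeries ℚ where
  toFun f :=
    { coeff := fun l => (-1 : ℚ) ^ l * f.coeff l
      isPWO_support' := f.isPWO_support'.mono (by
        intro l hl
        simp only [Function.mem_support] at hl ⊢
        intro h
        exact hl (by rw [h, mul_zero])) }
  map_one' := by
    ext a
    by_cases h : a = 0 <;> simp [HahnSeries.coeff_one, h]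
  map_mul' f g := by
    ext a
    show (-1 : ℚ) ^ a * (f * g).coeff a = _
    rw [HahnSeries.coeff_mul, HahnSeries.coeff_mul, Finset.mul_sum]
    have hne : (-1 : ℚ) ≠ 0 := by norm_num
    have hfsub : ∀ (h : LaurentSeries ℚ),
        (Function.support fun l => (-1 : ℚ) ^ l * h.coeff l) ⊆ h.support := by
      intro h l hl hc
      exact hl (by simp only [hc, mul_zero])
    refine Eq.symm (((Finset.sum_subset
        (((Finset.addAntidiagonal_mono_left (hfsub f)).trans
          (Finset.addAntidiagonal_mono_right (hfsub g)))) ?_)).trans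
        (Finset.sum_congr rfl ?_))
    · intro x hx hnx
      rw [Finset.mem_addAntidiagonal] at hx
      have hnx : x.1 ∈ (Function.support fun l => (-1 : ℚ) ^ l * f.coeff l) →
          x.2 ∈ (Function.support fun l => (-1 : ℚ) ^ l * g.coeff l) → x.1 + x.2 ≠ a :=
        fun h1 h2 h3 => hnx (Finset.mem_addAntidiagonal.mpr ⟨h1, h2, h3⟩)
      show (-1 : ℚ) ^ x.1 * f.coeff x.1 * ((-1 : ℚ) ^ x.2 * g.coeff x.2) = 0
      by_cases hc : f.coeff x.1 = 0
      · rw [hc, mul_zero, zero_mul]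
      · have h1 : x.1 ∈ Function.support fun l => (-1 : ℚ) ^ l * f.coeff l := by
          simp only [Function.mem_support]
          exact mul_ne_zero (zpow_ne_zero _ hne) hc
        have h2 := hnx h1
        have h3 : x.2 ∉ Function.support fun l => (-1 : ℚ) ^ l * g.coeff l := by
          intro hmem
          exact absurd hx.2.2 (h2 hmem)
      

        simp only [Function.mem_support, not_not] at h3
        rw [h3, mul_zero]
    · intro x hx
      rw [Finset.mem_addAntidiagonal] at hx
      show (-1 : ℚ) ^ x.1 * f.coeff x.1 * ((-1 : ℚ) ^ x.2 * g.coeff x.2)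
          = (-1 : ℚ) ^ a * (f.coeff x.1 * g.coeff x.2)
      rw [← hx.2.2, zpow_add₀ hne]
      ring
  map_zero' := by ext a; simp
  map_add' f g := by
    ext a
    show (-1 : ℚ) ^ a * (f + g).coeff a = _
    simp [mul_add]


lemma negz_coeff (f : LaurentSeries ℚ) (l : ℤ) :
    (negz f).coeff l = (-1 : ℚ) ^ l * f.coeff l := rfl

lemma negz_single (a : ℤ) (r : ℚ) :
    negz (HahnSeries.single a r) = HahnSeries.single a ((-1 : ℚ) ^ a * r) := by
  ext b
  by_cases h : b = a <;> simp [negz_coeff, HahnSeries.coeff_single, h]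

lemma single_neg' (a : ℤ) : HahnSeries.single a (-1 : ℚ) = -HahnSeries.single a (1 : ℚ) := by
  ext b
  by_cases h : b = a <;> simp [HahnSeries.coeff_single, h]

/-- A simply-laced finite-type (`ADE`) generalized Cartan matrix. -/
structure IsADECartan {n : ℕ} (C : Matrix (Fin n) (Fin n) ℤ) : Prop where
  symm : ∀ i j, C i j = C j i
  diag : ∀ i, C i i = 2
  offdiag : ∀ i j, i ≠ j → C i j = 0 ∨ C i j = -1
  posDef : (C.map ((↑) : ℤ → ℝ)).PosDef
  connected : ∀ i j, Relation.ReflTransGen (fun a b => C a b = -1) i j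

/-- The quantum Cartan matrix `C(z)` over the field of formal Laurent series. -/
noncomputable def qCartan {n : ℕ} (C : Matrix (Fin n) (Fin n) ℤ) :
    Matrix (Fin n) (Fin n) (LaurentSeries ℚ) :=
  Matrix.of fun i j =>
    if i = j then HahnSeries.single (1 : ℤ) (1 : ℚ) + HahnSeries.single (-1 : ℤ) (1 : ℚ)
    else (C i j : LaurentSeries ℚ)

/-- Parity vanishing: fixing a parity function `ε : I → {0,1}` with
`ε_i ≠ ε_j` whenever `c_{ij} = -1`, one has `c̃_{ij}(ℓ) = 0` unless `ℓ + ε_i + ε_j`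
is odd. -/
theorem statement8 {n : ℕ} (hn : 0 < n) (C : Matrix (Fin n) (Fin n) ℤ)
    (hC : IsADECartan C) (ct : Fin n → Fin n → ℤ → ℤ)
    (hct : ∀ i j ℓ, ((qCartan C)⁻¹ i j).coeff ℓ = (ct i j ℓ : ℚ))
    (ε : Fin n → ℤ) (hε01 : ∀ i, ε i = 0 ∨ ε i = 1)
    (hεadj : ∀ i j, C i j = -1 → ε i ≠ ε j) :
    ∀ (i j : Fin n) (ℓ : ℤ), 1 ≤ ℓ → ¬ Odd (ℓ + ε i + ε j) → ct i j ℓ = 0 := by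
  intro i j ℓ hℓ hodd
  have hne : (-1 : ℚ) ≠ 0 := by norm_num
  by_cases hdet : IsUnit (qCartan C).det
  swap
  · have h0 := hct i j ℓ
    rw [Matrix.nonsing_inv_apply_not_isUnit _ hdet] at h0
    simp only [Matrix.zero_apply, HahnSeries.coeff_zero] at h0
    exact_mod_cast h0.symm
  -- the sign function and sign matrix
  set s : Fin n → ℚ := fun i => (-1 : ℚ) ^ (ε i) with hs
  set E : Matrix (Fin n) (Fin n) (LaurentSeries ℚ) :=
    Matrix.diagonal fun i => HahnSeries.C (s i) with hE
  have hss : ∀ i, s i * s i = 1 := by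
    intro i
    rcases hε01 i with h | h <;> simp [hs, h]
  have hEE : E * E = 1 := by
    rw [hE, Matrix.diagonal_mul_diagonal]
    have : (fun i => HahnSeries.C (s i) * HahnSeries.C (s i))
        = fun _ => (1 : LaurentSeries ℚ) := by
      funext i; rw [← _root_.map_mul HahnSeries.C _ _, hss i, _root_.map_one]
    rw [this, Matrix.diagonal_one]
  have entry : ∀ (M : Matrix (Fin n) (Fin n) (LaurentSeries ℚ)) i j,
      ((-E) * M * E) i j = -(HahnSeries.C (s i) * M i j * HahnSeries.C (s j)) := by
    intro M i j
    rw [hE, Matrix.mul_diagonal, Matrix.neg_mul, Matrix.neg_apply, Matrix.diagonal_mul]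
    ring
  -- key conjugation identity
  have hkey : (qCartan C).map negz = (-E) * (qCartan C) * E := by
    apply Matrix.ext
    intro a b
    rw [Matrix.map_apply, entry]
    unfold qCartan
    rw [Matrix.of_apply]
    by_cases hab : a = b
    · subst hab
      rw [if_pos rfl]
      have h1 : HahnSeries.C (s a) *
          (HahnSeries.single (1 : ℤ) (1 : ℚ) + HahnSeries.single (-1 : ℤ) (1 : ℚ)) *
          HahnSeries.C (s a)
          = HahnSeries.single (1 : ℤ) (1 : ℚ) + HahnSeries.single (-1 : ℤ) (1 : ℚ) := by
        rw [mul_comm, ← mul_assoc, ← _root_.map_mul HahnSeries.C _ _, hss, _root_.map_one, one_mul]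
      rw [h1, _root_.map_add, negz_single, negz_single]
      rw [show ((-1 : ℚ) ^ (1 : ℤ) * 1) = -1 by norm_num,
        show ((-1 : ℚ) ^ (-1 : ℤ) * 1) = -1 by norm_num,
        single_neg', single_neg']
      ring
    · rw [if_neg hab]
      rcases hC.offdiag a b hab with h0 | h1
      · rw [h0]
        push_cast
        simp [_root_.map_zero]
      · have hsab : s a * s b = -1 := by
          have hne' := hεadj a b h1
          rcases hε01 a with ha | ha <;> rcases hε01 b with hb | hb
          · exact absurd (ha.trans hb.symm) hne'
          · rw [hs]; norm_num [ha, hb]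
          · rw [hs]; norm_num [ha, hb]
          · exact absurd (ha.trans hb.symm) hne'
        rw [h1, _root_.map_intCast]
        push_cast
        rw [show -(HahnSeries.C (s a) * (-1 : LaurentSeries ℚ) * HahnSeries.C (s b))
            = HahnSeries.C (s a) * HahnSeries.C (s b) by ring, ← _root_.map_mul HahnSeries.C _ _, hsab, _root_.map_neg, _root_.map_one]
  -- conclusion: B.map negz = (-E) * B * E
  have hAB := Matrix.mul_nonsing_inv _ hdet
  have h3 : (qCartan C).map negz * ((qCartan C)⁻¹.map negz) = 1 := by
    rw [← Matrix.map_mul, hAB, Matrix.map_one _ (_root_.map_zero negz) (_root_.map_one negz)]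
  have h2 : (qCartan C).map negz * ((-E) * (qCartan C)⁻¹ * E) = 1 := by
    rw [hkey]
    have hstep : (-E) * qCartan C * E * ((-E) * (qCartan C)⁻¹ * E)
        = E * (qCartan C * ((E * E) * ((qCartan C)⁻¹ * E))) := by
      simp only [Matrix.neg_mul, Matrix.mul_neg, neg_neg, Matrix.mul_assoc]
    rw [hstep, hEE, Matrix.one_mul, ← Matrix.mul_assoc (qCartan C), hAB, Matrix.one_mul, hEE]
  have hBE : (qCartan C)⁻¹.map negz = (-E) * (qCartan C)⁻¹ * E :=
    Matrix.right_inv_eq_right_inv h3 h2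
  have h4 : ((qCartan C)⁻¹.map negz) i j = ((-E) * (qCartan C)⁻¹ * E) i j := by rw [hBE]
  rw [Matrix.map_apply, entry] at h4
  have h5 := congrArg (fun f => HahnSeries.coeff f ℓ) h4
  simp only [negz_coeff, hct] at h5
  have h6 : (-(HahnSeries.C (s i) * (qCartan C)⁻¹ i j * HahnSeries.C (s j))).coeff ℓ
      = -((s i * s j) * (ct i j ℓ : ℚ)) := by
    rw [show HahnSeries.C (s i) * (qCartan C)⁻¹ i j * HahnSeries.C (s j)
        = HahnSeries.C (s i * s j) * (qCartan C)⁻¹ i j by rw [_root_.map_mul HahnSeries.C]; ring]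
    rw [HahnSeries.coeff_neg, HahnSeries.C_apply, HahnSeries.single_zero_mul_eq_smul,
      HahnSeries.coeff_smul, hct, smul_eq_mul]
  rw [h6] at h5
  -- now arithmetic over ℚ
  set q : ℚ := (ct i j ℓ : ℚ) with hq
  set x : ℚ := (-1 : ℚ) ^ ℓ with hx
  set y : ℚ := s i * s j with hy
  have heven : Even (ℓ + ε i + ε j) := Int.not_odd_iff_even.mp hodd
  have hxy : x * y = 1 := by
    rw [hx, hy, hs]
    rw [show (-1 : ℚ) ^ ℓ * ((-1 : ℚ) ^ ε i * (-1 : ℚ) ^ ε j)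
        = ((-1 : ℚ) ^ ℓ * (-1 : ℚ) ^ ε i) * (-1 : ℚ) ^ ε j by ring,
      ← zpow_add₀ hne, ← zpow_add₀ hne]
    exact heven.neg_one_zpow
  have hxx : x * x = 1 := by
    rw [hx, ← mul_zpow, neg_mul_neg, one_mul, _root_.one_zpow]
  have hq0 : q = 0 := by
    linear_combination (x / 2) * h5 - (q / 2) * hxx - (q / 2) * hxy
  have hq1 : ((ct i j ℓ : ℚ)) = 0 := hq0
  exact_mod_cast hq1
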